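/- Let T be a theory over a one-sorted first-order signature. If T is stably finite and finitely smooth, then T has a strong pre-witness. -/

import Mathlib

open FirstOrder FirstOrder.Language

universe u v

/-- `M` (with structure `inst`) is a model of the theory `T`. -/
def ModelsT (L : FirstOrder.Language.{u, v}) (T : L.Theory) (M : Type) (inst : L.Structure M) : Prop :=
  letI := inst
  T.Model M

/-- Realization of a formula, with the structure instance given explicitly. -/
def RealizeIn (L : FirstOrder.Language.{u, v}) (M : Type) (inst : L.Structure M) {α : Type}
    (φ : L.Formula α) (v : α → M) : Prop :=
  letI := inst
  φ.Realize v

/-- A valuation `v` satisfies the arrangement `δ_V^E` determined on the finite variable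
set `V` by the equivalence relation `E`. -/
def RealizesArr {M : Type} (E : Setoid ℕ) (V : Finset ℕ) (v : ℕ → M) : Prop :=
  ∀ x ∈ V, ∀ y ∈ V, (E.r x y ↔ v x = v y)

/-- `T` is stably finite: every quantifier-free formula satisfied in a model of `T` is
satisfied in a finite model of `T` of no greater cardinality. -/
def StablyFiniteT (L : FirstOrder.Language.{u, v}) (T : L.Theory) : Prop :=
  ∀ φ : L.Formula ℕ, φ.IsQF →
    ∀ (M : Type) (inst : L.Structure M), ModelsT L T M inst →
      ∀ v : ℕ → M, RealizeIn L M inst φ v →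
        ∃ (N : Type) (instN : L.Structure N), ModelsT L T N instN ∧ Finite N ∧
          Cardinal.mk N ≤ Cardinal.mk M ∧ ∃ w : ℕ → N, RealizeIn L N instN φ w

/-- `T` is finitely smooth: for every quantifier-free formula `φ`, model of `T` with a
valuation satisfying `φ`, and finite cardinal `κ` at least the size of the model, there
is a model of `T` of size exactly `κ` with a valuation satisfying `φ`. -/
def FinitelySmoothT (L : FirstOrder.Language.{u, v}) (T : L.Theory) : Prop :=
  ∀ φ : L.Formula ℕ, φ.IsQF →
    ∀ (M : Type) (inst : L.Structure M), ModelsT L T M inst →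
      ∀ v : ℕ → M, RealizeIn L M inst φ v →
        ∀ κ : ℕ, Cardinal.mk M ≤ (κ : Cardinal) →
          ∃ (N : Type) (instN : L.Structure N), ModelsT L T N instN ∧
            Cardinal.mk N = (κ : Cardinal) ∧ ∃ w : ℕ → N, RealizeIn L N instN φ w

/-- `T` is smooth: for every quantifier-free formula `φ`, model of `T` with a valuation
satisfying `φ`, and cardinal `κ` at least the size of the model, there is a model of `T`
of size exactly `κ` with a valuation satisfying `φ`. -/
def SmoothT (L : FirstOrder.Language.{u, v}) (T : L.Theory) : Prop :=
  ∀ φ : L.Formula ℕ, φ.IsQF →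
    ∀ (M : Type) (inst : L.Structure M), ModelsT L T M inst →
      ∀ v : ℕ → M, RealizeIn L M inst φ v →
        ∀ κ : Cardinal, Cardinal.mk M ≤ κ →
          ∃ (N : Type) (instN : L.Structure N), ModelsT L T N instN ∧
            Cardinal.mk N = κ ∧ ∃ w : ℕ → N, RealizeIn L N instN φ w

/-- `T` is stably infinite: every quantifier-free formula satisfiable in some model of `T`
is satisfiable in some model of `T` with infinite domain. -/
def StablyInfiniteT (L : FirstOrder.Language.{u, v}) (T : L.Theory) : Prop :=
  ∀ φ : L.Formula ℕ, φ.IsQF →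
    (∃ (M : Type) (inst : L.Structure M), ModelsT L T M inst ∧
      ∃ v : ℕ → M, RealizeIn L M inst φ v) →
    ∃ (M : Type) (inst : L.Structure M), ModelsT L T M inst ∧ Infinite M ∧
      ∃ v : ℕ → M, RealizeIn L M inst φ v

/-- `wit` is a pre-witness for `T`: it maps quantifier-free formulas to quantifier-free
formulas; `φ` and `∃x⃗. wit(φ)` (where `x⃗ = vars(wit(φ)) \ vars(φ)`) hold in exactly the
same models-with-valuations of `T`; and if `wit(φ)` is satisfiable in a model of `T`,
then `φ` is satisfied in some model of `T` under a valuation in which every element of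
the domain is the value of some variable of `wit(φ)`. -/
def IsPreWitness (L : FirstOrder.Language.{u, v}) (T : L.Theory) (wit : L.Formula ℕ → L.Formula ℕ) :
    Prop :=
  (∀ φ : L.Formula ℕ, φ.IsQF → (wit φ).IsQF) ∧
  (∀ φ : L.Formula ℕ, φ.IsQF →
    ∀ (M : Type) (inst : L.Structure M), ModelsT L T M inst → ∀ v : ℕ → M,
      (RealizeIn L M inst φ v ↔
        ∃ w : ℕ → M, (∀ x : ℕ, x ∉ (wit φ).freeVarFinset \ φ.freeVarFinset → w x = v x) ∧
          RealizeIn L M inst (wit φ) w)) ∧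
  (∀ φ : L.Formula ℕ, φ.IsQF →
    (∃ (M : Type) (inst : L.Structure M), ModelsT L T M inst ∧
      ∃ v : ℕ → M, RealizeIn L M inst (wit φ) v) →
    ∃ (M : Type) (inst : L.Structure M), ModelsT L T M inst ∧
      ∃ v : ℕ → M, RealizeIn L M inst φ v ∧
        ∀ a : M, ∃ x ∈ (wit φ).freeVarFinset, v x = a)

/-- `wit` is a strong pre-witness for `T`: a pre-witness such that in addition, for every
quantifier-free `φ`, finite variable set `V`, and arrangement `δ_V` of `V`, if
`wit(φ) ∧ δ_V` is satisfiable in a model of `T`, then it is satisfied in some model of `T`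
under a valuation in which every element of the domain is the value of some variable of
`wit(φ) ∧ δ_V`. -/
def IsStrongPreWitness (L : FirstOrder.Language.{u, v}) (T : L.Theory)
    (wit : L.Formula ℕ → L.Formula ℕ) : Prop :=
  IsPreWitness L T wit ∧
  ∀ φ : L.Formula ℕ, φ.IsQF → ∀ (V : Finset ℕ) (E : Setoid ℕ),
    (∃ (M : Type) (inst : L.Structure M), ModelsT L T M inst ∧
      ∃ v : ℕ → M, RealizeIn L M inst (wit φ) v ∧ RealizesArr E V v) →
    ∃ (M : Type) (inst : L.Structure M), ModelsT L T M inst ∧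
      ∃ v : ℕ → M, RealizeIn L M inst (wit φ) v ∧ RealizesArr E V v ∧
        ∀ a : M, ∃ x ∈ (wit φ).freeVarFinset ∪ V, v x = a


namespace SPW
variable {L : FirstOrder.Language.{u, v}}

/-- variable equality formula -/
def veq (x y : ℕ) : L.Formula ℕ := Term.equal (Term.var x) (Term.var y)

lemma realize_veq {M : Type} [L.Structure M] {x y : ℕ} {v : ℕ → M} :
    (veq (L := L) x y).Realize v ↔ v x = v y := by
  simp [veq, Formula.realize_equal, Term.realize]

lemma isQF_veq (x y : ℕ) : (veq (L := L) x y).IsQF :=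
  (BoundedFormula.IsAtomic.equal _ _).isQF

lemma fvF_veq (x y : ℕ) : (veq (L := L) x y).freeVarFinset = {x} ∪ {y} := rfl

/-- conjunction of a list of formulas -/
def conjList : List (L.Formula ℕ) → L.Formula ℕ
  | [] => ⊤
  | ψ :: s => ψ ⊓ conjList s

lemma realize_conjList {M : Type} [L.Structure M] {s : List (L.Formula ℕ)} {v : ℕ → M} :
    (conjList s).Realize v ↔ ∀ ψ ∈ s, ψ.Realize v := by
  induction s with
  | nil => simp [conjList]
  | cons ψ s ih => simp [conjList, Formula.realize_inf, ih]

lemma isQF_conjList {s : List (L.Formula ℕ)} (h : ∀ ψ ∈ s, ψ.IsQF) : (conjList s).IsQF := by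
  induction s with
  | nil => exact BoundedFormula.IsQF.top
  | cons ψ s ih =>
    exact (h ψ (by simp)).inf (ih fun χ hχ => h χ (by simp [hχ]))

lemma fvF_inf (φ ψ : L.Formula ℕ) :
    (φ ⊓ ψ).freeVarFinset = φ.freeVarFinset ∪ ψ.freeVarFinset := by
  show ((φ.imp ψ.not).not).freeVarFinset = _
  simp [BoundedFormula.not]

lemma fvF_top : (⊤ : L.Formula ℕ).freeVarFinset = ∅ := by
  show ((⊥ : L.Formula ℕ).not).freeVarFinset = ∅
  simp [BoundedFormula.not]

lemma mem_fvF_conjList {s : List (L.Formula ℕ)} {x : ℕ} :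
    x ∈ (conjList s).freeVarFinset ↔ ∃ ψ ∈ s, x ∈ ψ.freeVarFinset := by
  induction s with
  | nil => simp [conjList, fvF_top]
  | cons ψ s ih => simp [conjList, fvF_inf, ih]


lemma term_realize_congr {M : Type} [L.Structure M] {n : ℕ} {v w : ℕ → M}
    (t : L.Term (ℕ ⊕ Fin n)) (xs : Fin n → M)
    (h : ∀ x ∈ t.varFinsetLeft, v x = w x) :
    t.realize (Sum.elim v xs) = t.realize (Sum.elim w xs) := by
  induction t with
  | var a =>
    cases a with
    | inl a => exact h a (by simp [Term.varFinsetLeft])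
    | inr a => rfl
  | func f ts ih =>
    simp only [Term.realize]
    congr 1
    funext i
    exact ih i fun x hx => h x (by
      simp only [Term.varFinsetLeft, Finset.mem_biUnion]
      exact ⟨i, Finset.mem_univ i, hx⟩)

lemma bf_realize_congr {M : Type} [L.Structure M] {n : ℕ} {φ : L.BoundedFormula ℕ n}
    {v w : ℕ → M} (h : ∀ x ∈ φ.freeVarFinset, v x = w x) (xs : Fin n → M) :
    φ.Realize v xs ↔ φ.Realize w xs := by
  induction φ with
  | falsum => rfl
  | equal t₁ t₂ =>
    simp only [BoundedFormula.Realize]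
    rw [term_realize_congr t₁ xs fun x hx => h x (by simp [BoundedFormula.freeVarFinset, hx]),
      term_realize_congr t₂ xs fun x hx => h x (by simp [BoundedFormula.freeVarFinset, hx])]
  | rel R ts =>
    simp only [BoundedFormula.Realize]
    have : (fun i => (ts i).realize (Sum.elim v xs)) = fun i => (ts i).realize (Sum.elim w xs) := by
      funext i
      exact term_realize_congr _ xs fun x hx => h x (by
        simp only [BoundedFormula.freeVarFinset, Finset.mem_biUnion]
        exact ⟨i, Finset.mem_univ i, hx⟩)
    rw [this]
  | imp φ₁ φ₂ ih₁ ih₂ =>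
    simp only [BoundedFormula.Realize]
    rw [ih₁ (fun x hx => h x (by simp [BoundedFormula.freeVarFinset, hx])) ,
      ih₂ (fun x hx => h x (by simp [BoundedFormula.freeVarFinset, hx]))]
  | all φ ih =>
    simp only [BoundedFormula.realize_all]
    constructor <;> intro h' a
    · exact (ih (fun x hx => h x hx) _).mp (h' a)
    · exact (ih (fun x hx => h x hx) _).mpr (h' a)

lemma formula_realize_congr {M : Type} [L.Structure M] {φ : L.Formula ℕ}
    {v w : ℕ → M} (h : ∀ x ∈ φ.freeVarFinset, v x = w x) :
    φ.Realize v ↔ φ.Realize w :=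
  bf_realize_congr h _


/-- the arrangement formula on the list `l` of variables determined by pattern `g` on positions -/
def arrP (l : List ℕ) (g : Fin l.length → Fin l.length) : L.Formula ℕ :=
  conjList <| ((List.finRange l.length).product (List.finRange l.length)).map
    fun p => if g p.1 = g p.2 then veq (l.get p.1) (l.get p.2) else (veq (l.get p.1) (l.get p.2)).not

lemma realize_arrP {M : Type} [L.Structure M] {l : List ℕ} {g : Fin l.length → Fin l.length}
    {v : ℕ → M} :
    (arrP (L := L) l g).Realize v ↔ ∀ i j : Fin l.length, (g i = g j ↔ v (l.get i) = v (l.get j)) := by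
  rw [arrP, realize_conjList]
  constructor
  · intro h i j
    have := h _ (List.mem_map.2 ⟨(i, j), List.pair_mem_product.2 ⟨List.mem_finRange i, List.mem_finRange j⟩, rfl⟩)
    by_cases hg : g i = g j
    · rw [if_pos hg] at this
      exact ⟨fun _ => realize_veq.1 this, fun _ => hg⟩
    · rw [if_neg hg] at this
      rw [Formula.realize_not, realize_veq] at this
      exact ⟨fun h' => absurd h' hg, fun h' => absurd h' this⟩
  · intro h ψ hψ
    obtain ⟨⟨i, j⟩, hmem, rfl⟩ := List.mem_map.1 hψ
    by_cases hg : g i = g j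
    · rw [if_pos hg]
      exact realize_veq.2 ((h i j).1 hg)
    · rw [if_neg hg]
      rw [Formula.realize_not, realize_veq]
      exact fun h' => hg ((h i j).2 h')

/-- pattern of a valuation on the list `l`: least position with the same value -/
noncomputable def patt (l : List ℕ) {M : Type} (v : ℕ → M) (i : Fin l.length) : Fin l.length := by
  classical
  exact Finset.min' (Finset.univ.filter fun j : Fin l.length => v (l.get j) = v (l.get i))
    ⟨i, Finset.mem_filter.2 ⟨Finset.mem_univ i, rfl⟩⟩

lemma patt_val {l : List ℕ} {M : Type} (v : ℕ → M) (i : Fin l.length) :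
    v (l.get (patt l v i)) = v (l.get i) := by
  classical
  have := Finset.min'_mem (Finset.univ.filter fun j : Fin l.length => v (l.get j) = v (l.get i))
    ⟨i, Finset.mem_filter.2 ⟨Finset.mem_univ i, rfl⟩⟩
  simpa [patt] using (Finset.mem_filter.1 this).2

lemma patt_eq_iff {l : List ℕ} {M : Type} (v : ℕ → M) (i j : Fin l.length) :
    patt l v i = patt l v j ↔ v (l.get i) = v (l.get j) := by
  classical
  constructor
  · intro h
    have h1 := patt_val (l := l) v i
    have h2 := patt_val (l := l) v j
    rw [h] at h1
    rw [← h1, h2]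
  · intro h
    have : (Finset.univ.filter fun k : Fin l.length => v (l.get k) = v (l.get i)) =
        (Finset.univ.filter fun k : Fin l.length => v (l.get k) = v (l.get j)) := by
      apply Finset.filter_congr
      intro k _
      simp only [List.get_eq_getElem] at h ⊢
      rw [h]
    simp only [patt]
    congr 1


/-- pairwise distinctness of the variables B, B+1, ..., B+k-1 -/
def distinctF (B k : ℕ) : L.Formula ℕ :=
  conjList <| ((List.range k).product (List.range k)).map fun p =>
    if p.1 = p.2 then ⊤ else (veq (B + p.1) (B + p.2)).not

lemma realize_distinctF {M : Type} [L.Structure M] {B k : ℕ} {v : ℕ → M} :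
    (distinctF (L := L) B k).Realize v ↔
      ∀ i j, i < k → j < k → i ≠ j → v (B + i) ≠ v (B + j) := by
  rw [distinctF, realize_conjList]
  constructor
  · intro h i j hi hj hij
    have := h _ (List.mem_map.2 ⟨(i, j), List.pair_mem_product.2
      ⟨List.mem_range.2 hi, List.mem_range.2 hj⟩, rfl⟩)
    rw [if_neg hij, Formula.realize_not, realize_veq] at this
    exact this
  · intro h ψ hψ
    obtain ⟨⟨i, j⟩, hmem, rfl⟩ := List.mem_map.1 hψ
    obtain ⟨hi, hj⟩ := List.pair_mem_product.1 hmem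
    by_cases hij : i = j
    · rw [if_pos hij]; exact Formula.realize_top.2 trivial
    · rw [if_neg hij, Formula.realize_not, realize_veq]
      exact h i j (List.mem_range.1 hi) (List.mem_range.1 hj) hij

/-- `ψ` has a model of `T` of finite size `n` -/
def HasFinModel (L : FirstOrder.Language.{u, v}) (T : L.Theory) (ψ : L.Formula ℕ) (n : ℕ) : Prop :=
  ∃ (M : Type) (inst : L.Structure M), ModelsT L T M inst ∧ Cardinal.mk M = (n : Cardinal) ∧
    ∃ w : ℕ → M, RealizeIn L M inst ψ w

open scoped Classical in
noncomputable def minSize (L : FirstOrder.Language.{u, v}) (T : L.Theory) (ψ : L.Formula ℕ) : ℕ :=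
  if h : ∃ n, HasFinModel L T ψ n then Nat.find h else 0

lemma minSize_le {T : L.Theory} {ψ : L.Formula ℕ} {n : ℕ} (h : HasFinModel L T ψ n) :
    minSize L T ψ ≤ n := by
  classical
  rw [minSize]
  split
  · next h' => exact Nat.find_le h
  · next h' => exact absurd ⟨n, h⟩ h'

lemma minSize_spec {T : L.Theory} {ψ : L.Formula ℕ} (h : ∃ n, HasFinModel L T ψ n) :
    HasFinModel L T ψ (minSize L T ψ) := by
  classical
  rw [minSize]
  split
  · next h' => exact Nat.find_spec h'
  · next h' => exact absurd h h'


/-! ### The witness construction -/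

/-- list of free variables of `φ` -/
noncomputable def vlist (φ : L.Formula ℕ) : List ℕ := φ.freeVarFinset.toList

lemma mem_vlist {φ : L.Formula ℕ} {x : ℕ} : x ∈ vlist φ ↔ x ∈ φ.freeVarFinset :=
  Finset.mem_toList

/-- base for fresh variables -/
def base (φ : L.Formula ℕ) : ℕ := φ.freeVarFinset.sup id + 1

lemma lt_base {φ : L.Formula ℕ} {x : ℕ} (h : x ∈ φ.freeVarFinset) : x < base φ :=
  Nat.lt_succ_of_le (Finset.le_sup (f := id) h)

variable (L) in
/-- the number of fresh variables -/
noncomputable def bigN (T : L.Theory) (φ : L.Formula ℕ) : ℕ :=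
  Finset.univ.sup fun g : Fin (vlist φ).length → Fin (vlist φ).length =>
    minSize L T (φ ⊓ arrP (vlist φ) g)

lemma minSize_le_bigN {T : L.Theory} {φ : L.Formula ℕ}
    (g : Fin (vlist φ).length → Fin (vlist φ).length) :
    minSize L T (φ ⊓ arrP (vlist φ) g) ≤ bigN L T φ := by
  unfold bigN
  exact Finset.le_sup (f := fun g : Fin (vlist φ).length → Fin (vlist φ).length =>
    minSize L T (φ ⊓ arrP (vlist φ) g)) (Finset.mem_univ g)

variable (L) in
/-- the fresh variable block -/
noncomputable def uBlock (T : L.Theory) (φ : L.Formula ℕ) : Finset ℕ :=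
  (Finset.range (bigN L T φ)).image (fun i => base φ + i)

lemma mem_uBlock {T : L.Theory} {φ : L.Formula ℕ} {x : ℕ} :
    x ∈ uBlock L T φ ↔ ∃ i < bigN L T φ, base φ + i = x := by
  simp [uBlock]

lemma uBlock_disj {T : L.Theory} {φ : L.Formula ℕ} {x : ℕ} (h : x ∈ uBlock L T φ) :
    x ∉ φ.freeVarFinset := by
  obtain ⟨i, _, rfl⟩ := mem_uBlock.1 h
  intro hx
  have := lt_base hx
  omega

variable (L) in
/-- the witness formula -/
noncomputable def witF (T : L.Theory) (φ : L.Formula ℕ) : L.Formula ℕ :=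
  φ ⊓ conjList ((List.range (bigN L T φ)).map fun i => veq (base φ + i) (base φ + i))
    ⊓ conjList ((Finset.univ.toList (α := Fin (vlist φ).length → Fin (vlist φ).length)).map
        fun g => (arrP (vlist φ) g).imp
          (distinctF (base φ) (minSize L T (φ ⊓ arrP (vlist φ) g))))

lemma isQF_arrP {l : List ℕ} {g : Fin l.length → Fin l.length} : (arrP (L := L) l g).IsQF := by
  apply isQF_conjList
  intro ψ hψ
  obtain ⟨⟨i, j⟩, _, rfl⟩ := List.mem_map.1 hψ
  dsimp only
  split
  · exact isQF_veq _ _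
  · exact (isQF_veq _ _).not

lemma isQF_distinctF {B k : ℕ} : (distinctF (L := L) B k).IsQF := by
  apply isQF_conjList
  intro ψ hψ
  obtain ⟨⟨i, j⟩, _, rfl⟩ := List.mem_map.1 hψ
  dsimp only
  split
  · exact BoundedFormula.IsQF.top
  · exact (isQF_veq _ _).not

lemma isQF_witF {T : L.Theory} {φ : L.Formula ℕ} (h : φ.IsQF) : (witF L T φ).IsQF := by
  refine (h.inf ?_).inf ?_
  · exact isQF_conjList fun ψ hψ => by
      obtain ⟨i, _, rfl⟩ := List.mem_map.1 hψ
      exact isQF_veq _ _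
  · exact isQF_conjList fun ψ hψ => by
      obtain ⟨g, _, rfl⟩ := List.mem_map.1 hψ
      exact isQF_arrP.imp isQF_distinctF

lemma realize_witF {T : L.Theory} {φ : L.Formula ℕ} {M : Type} [L.Structure M] {v : ℕ → M} :
    (witF L T φ).Realize v ↔ φ.Realize v ∧
      ∀ g : Fin (vlist φ).length → Fin (vlist φ).length,
        (arrP (L := L) (vlist φ) g).Realize v →
          (distinctF (L := L) (base φ) (minSize L T (φ ⊓ arrP (vlist φ) g))).Realize v := by
  simp only [witF, Formula.realize_inf, realize_conjList]
  constructor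
  · rintro ⟨⟨hφ, _⟩, himp⟩
    refine ⟨hφ, fun g hg => ?_⟩
    have hmem : ((arrP (L := L) (vlist φ) g).imp
          (distinctF (base φ) (minSize L T (φ ⊓ arrP (vlist φ) g)))) ∈
        (Finset.univ.toList (α := Fin (vlist φ).length → Fin (vlist φ).length)).map
          (fun g => (arrP (L := L) (vlist φ) g).imp
            (distinctF (base φ) (minSize L T (φ ⊓ arrP (vlist φ) g)))) :=
      List.mem_map.2 ⟨g, Finset.mem_toList.2 (Finset.mem_univ g), rfl⟩
    exact Formula.realize_imp.1 (himp _ hmem) hg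
  · rintro ⟨hφ, himp⟩
    refine ⟨⟨hφ, fun ψ hψ => ?_⟩, fun ψ hψ => ?_⟩
    · obtain ⟨i, _, rfl⟩ := List.mem_map.1 hψ
      exact realize_veq.2 rfl
    · obtain ⟨g, _, rfl⟩ := List.mem_map.1 hψ
      exact Formula.realize_imp.2 (himp g)

lemma fvF_not (ψ : L.Formula ℕ) : (ψ.not).freeVarFinset = ψ.freeVarFinset := by
  show (ψ.imp ⊥).freeVarFinset = _
  simp [BoundedFormula.freeVarFinset]

lemma fvF_arrP_subset {φ : L.Formula ℕ} {g : Fin (vlist φ).length → Fin (vlist φ).length} :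
    (arrP (L := L) (vlist φ) g).freeVarFinset ⊆ φ.freeVarFinset := by
  intro x hx
  rw [arrP] at hx
  obtain ⟨ψ, hψ, hxψ⟩ := mem_fvF_conjList.1 hx
  obtain ⟨⟨i, j⟩, _, rfl⟩ := List.mem_map.1 hψ
  have hmem : ∀ k : Fin (vlist φ).length, (vlist φ).get k ∈ φ.freeVarFinset := fun k =>
    mem_vlist.1 ((vlist φ).get_mem k)
  have hor : x = (vlist φ).get i ∨ x = (vlist φ).get j := by
    revert hxψ
    dsimp only
    split
    · rw [fvF_veq]; simp
    · rw [fvF_not, fvF_veq]; simp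
  rcases hor with rfl | rfl
  · exact hmem i
  · exact hmem j

lemma fvF_distinctF_subset {B k : ℕ} :
    (distinctF (L := L) B k).freeVarFinset ⊆ (Finset.range k).image (fun i => B + i) := by
  intro x hx
  rw [distinctF] at hx
  obtain ⟨ψ, hψ, hxψ⟩ := mem_fvF_conjList.1 hx
  obtain ⟨⟨i, j⟩, hmem, rfl⟩ := List.mem_map.1 hψ
  obtain ⟨hi, hj⟩ := List.pair_mem_product.1 hmem
  have hor : x = B + i ∨ x = B + j := by
    revert hxψ
    dsimp only
    split
    · rw [fvF_top]; simp
    · rw [fvF_not, fvF_veq]; simp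
  rcases hor with rfl | rfl
  · exact Finset.mem_image.2 ⟨i, Finset.mem_range.2 (List.mem_range.1 hi), rfl⟩
  · exact Finset.mem_image.2 ⟨j, Finset.mem_range.2 (List.mem_range.1 hj), rfl⟩

lemma uBlock_subset_fvF_witF {T : L.Theory} {φ : L.Formula ℕ} :
    uBlock L T φ ⊆ (witF L T φ).freeVarFinset := by
  intro x hx
  obtain ⟨i, hi, rfl⟩ := mem_uBlock.1 hx
  rw [witF, fvF_inf, fvF_inf]
  apply Finset.mem_union_left
  apply Finset.mem_union_right
  apply mem_fvF_conjList.2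
  exact ⟨veq (base φ + i) (base φ + i), List.mem_map.2 ⟨i, List.mem_range.2 hi, rfl⟩,
    by rw [fvF_veq]; simp⟩

lemma fvF_imp (φ ψ : L.Formula ℕ) :
    (φ.imp ψ).freeVarFinset = φ.freeVarFinset ∪ ψ.freeVarFinset := rfl

lemma fvF_witF_subset {T : L.Theory} {φ : L.Formula ℕ} :
    (witF L T φ).freeVarFinset ⊆ φ.freeVarFinset ∪ uBlock L T φ := by
  rw [witF, fvF_inf, fvF_inf]
  intro x hx
  rcases Finset.mem_union.1 hx with hx | hx
  · rcases Finset.mem_union.1 hx with hx | hx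
    · exact Finset.mem_union_left _ hx
    · obtain ⟨ψ, hψ, hxψ⟩ := mem_fvF_conjList.1 hx
      obtain ⟨i, hi, rfl⟩ := List.mem_map.1 hψ
      rw [fvF_veq] at hxψ
      have hxe : x = base φ + i := by simpa using hxψ
      exact Finset.mem_union_right _ (mem_uBlock.2 ⟨i, List.mem_range.1 hi, hxe.symm⟩)
  · obtain ⟨ψ, hψ, hxψ⟩ := mem_fvF_conjList.1 hx
    obtain ⟨g, _, rfl⟩ := List.mem_map.1 hψ
    rw [fvF_imp] at hxψ
    rcases Finset.mem_union.1 hxψ with h | h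
    · exact Finset.mem_union_left _ (fvF_arrP_subset h)
    · obtain ⟨i, hi, rfl⟩ := Finset.mem_image.1 (fvF_distinctF_subset h)
      exact Finset.mem_union_right _ (mem_uBlock.2
        ⟨i, lt_of_lt_of_le (Finset.mem_range.1 hi) (minSize_le_bigN g), rfl⟩)

lemma fvF_subset_fvF_witF {T : L.Theory} {φ : L.Formula ℕ} :
    φ.freeVarFinset ⊆ (witF L T φ).freeVarFinset := by
  rw [witF, fvF_inf, fvF_inf]
  intro x hx
  exact Finset.mem_union_left _ (Finset.mem_union_left _ hx)

lemma arrP_congr {l : List ℕ} {g g' : Fin l.length → Fin l.length}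
    (h : ∀ i j, g i = g j ↔ g' i = g' j) : arrP (L := L) l g = arrP l g' := by
  rw [arrP, arrP]
  congr 1
  apply List.map_congr_left
  intro p _
  by_cases hp : g p.1 = g p.2
  · rw [if_pos hp, if_pos ((h _ _).1 hp)]
  · rw [if_neg hp, if_neg (fun hc => hp ((h _ _).2 hc))]

lemma realize_arrP_patt {l : List ℕ} {M : Type} [L.Structure M] (v : ℕ → M) :
    (arrP (L := L) l (patt l v)).Realize v :=
  realize_arrP.2 fun i j => patt_eq_iff v i j

lemma exists_hasFinModel {T : L.Theory} (hsf : StablyFiniteT L T) {ψ : L.Formula ℕ}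
    (hψ : ψ.IsQF) {M : Type} (inst : L.Structure M) (hM : ModelsT L T M inst) {v : ℕ → M}
    (hv : RealizeIn L M inst ψ v) :
    ∃ n : ℕ, HasFinModel L T ψ n ∧ (n : Cardinal) ≤ Cardinal.mk M := by
  obtain ⟨N, instN, hN, hfin, hle, w, hw⟩ := hsf ψ hψ M inst hM v hv
  have hlt : Cardinal.mk N < Cardinal.aleph0 := Cardinal.lt_aleph0_of_finite N
  obtain ⟨n, hn⟩ := Cardinal.lt_aleph0.1 hlt
  exact ⟨n, ⟨N, instN, hN, hn, w, hw⟩, hn ▸ hle⟩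

lemma strong_main {T : L.Theory} (hsf : StablyFiniteT L T) (hfs : FinitelySmoothT L T)
    {φ : L.Formula ℕ} (hQF : φ.IsQF) (V : Finset ℕ) (E : Setoid ℕ)
    {M : Type} (inst : L.Structure M) (hM : ModelsT L T M inst) {v : ℕ → M}
    (hv : RealizeIn L M inst (witF L T φ) v) (harr : RealizesArr E V v) :
    ∃ (A : Type) (instA : L.Structure A), ModelsT L T A instA ∧
      ∃ w : ℕ → A, RealizeIn L A instA (witF L T φ) w ∧ RealizesArr E V w ∧
        ∀ a : A, ∃ x ∈ (witF L T φ).freeVarFinset ∪ V, w x = a := by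
  classical
  letI := inst
  have hv' : (witF L T φ).Realize v := hv
  obtain ⟨hφv, himp⟩ := realize_witF.1 hv'
  set l := vlist φ with hl
  set g₀ := patt l v with hg₀def
  have hg₀ : (arrP (L := L) l g₀).Realize v := realize_arrP_patt v
  set ψ := φ ⊓ arrP (L := L) l g₀ with hψdef
  have hψQF : ψ.IsQF := hQF.inf isQF_arrP
  have hψv : ψ.Realize v := Formula.realize_inf.2 ⟨hφv, hg₀⟩
  set n₀ := minSize L T ψ with hn₀def
  have hdist : (distinctF (L := L) (base φ) n₀).Realize v := himp g₀ hg₀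
  have hdist' := realize_distinctF.1 hdist
  obtain ⟨nn, hfm, _⟩ := exists_hasFinModel hsf hψQF inst hM (show RealizeIn L M inst ψ v from hψv)
  obtain ⟨N₀, inst₀, hN₀, hcard₀, w₀, hw₀⟩ := minSize_spec (T := T) ⟨nn, hfm⟩
  set W := (witF L T φ).freeVarFinset ∪ V with hW
  set A := W.image v with hAdef
  set c := A.card with hcdef
  have hn₀N : n₀ ≤ bigN L T φ := minSize_le_bigN g₀
  have hbase : ∀ x ∈ φ.freeVarFinset, x ∈ W := fun x hx =>
    Finset.mem_union_left _ (fvF_subset_fvF_witF hx)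
  have huBW : ∀ i, i < bigN L T φ → base φ + i ∈ W := fun i hi =>
    Finset.mem_union_left _ (uBlock_subset_fvF_witF (mem_uBlock.2 ⟨i, hi, rfl⟩))
  have hcn : n₀ ≤ c := by
    have hsub : (Finset.range n₀).image (fun i => v (base φ + i)) ⊆ A := by
      intro a ha
      obtain ⟨i, hi, rfl⟩ := Finset.mem_image.1 ha
      exact Finset.mem_image.2 ⟨base φ + i,
        huBW i (lt_of_lt_of_le (Finset.mem_range.1 hi) hn₀N), rfl⟩
    have hcard : ((Finset.range n₀).image (fun i => v (base φ + i))).card = n₀ := by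
      rw [Finset.card_image_of_injOn, Finset.card_range]
      intro i hi j hj hij
      by_contra hne
      exact hdist' i j (Finset.mem_range.1 hi) (Finset.mem_range.1 hj) hne hij
    calc n₀ = _ := hcard.symm
      _ ≤ c := Finset.card_le_card hsub
  have hle : Cardinal.mk N₀ ≤ (c : Cardinal) := by
    rw [hcard₀]; exact_mod_cast hcn
  obtain ⟨NN, instNN, hNN, hcNN, w₁, hw₁⟩ := hfs ψ hψQF N₀ inst₀ hN₀ w₀ hw₀ c hle
  letI := instNN
  have hw₁' : ψ.Realize w₁ := hw₁
  obtain ⟨hφw₁, hgw₁⟩ := Formula.realize_inf.1 hw₁'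
  have hpatt : ∀ x ∈ φ.freeVarFinset, ∀ y ∈ φ.freeVarFinset, (v x = v y ↔ w₁ x = w₁ y) := by
    intro x hx y hy
    obtain ⟨i, hi⟩ := List.mem_iff_get.1 (mem_vlist.2 hx)
    obtain ⟨j, hj⟩ := List.mem_iff_get.1 (mem_vlist.2 hy)
    subst hi; subst hj
    rw [← (realize_arrP.1 hg₀ i j), (realize_arrP.1 hgw₁ i j)]
  obtain ⟨hFT, hcard⟩ := Cardinal.mk_eq_nat_iff_fintype.1 hcNN
  set S := φ.freeVarFinset with hSdef
  set A₁ := S.image v with hA₁def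
  have hA₁A : A₁ ⊆ A := Finset.image_subset_image (fun x hx => hbase x hx)
  set pick : M → ℕ := fun a => if h : ∃ x, x ∈ S ∧ v x = a then Classical.choose h else 0
    with hpickdef
  have hpick : ∀ a ∈ A₁, pick a ∈ S ∧ v (pick a) = a := by
    intro a ha
    obtain ⟨x, hx, rfl⟩ := Finset.mem_image.1 ha
    have hex : ∃ y, y ∈ S ∧ v y = v x := ⟨x, hx, rfl⟩
    rw [hpickdef]
    simp only [dif_pos hex]
    exact Classical.choose_spec hex
  set ρcore : M → NN := fun a => w₁ (pick a) with hρcoredef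
  set B₁ := S.image w₁ with hB₁def
  have himg : A₁.image ρcore = B₁ := by
    apply Finset.Subset.antisymm
    · intro b hb
      obtain ⟨a, ha, rfl⟩ := Finset.mem_image.1 hb
      exact Finset.mem_image.2 ⟨pick a, (hpick a ha).1, rfl⟩
    · intro b hb
      obtain ⟨x, hx, rfl⟩ := Finset.mem_image.1 hb
      have hmem : v x ∈ A₁ := Finset.mem_image.2 ⟨x, hx, rfl⟩
      refine Finset.mem_image.2 ⟨v x, hmem, ?_⟩
      exact (hpatt _ (hpick _ hmem).1 _ hx).1 (hpick _ hmem).2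
  have hinjcore : ∀ a ∈ A₁, ∀ b ∈ A₁, ρcore a = ρcore b → a = b := by
    intro a ha b hb hab
    have h1 := hpick a ha
    have h2 := hpick b hb
    have := (hpatt _ h1.1 _ h2.1).2 hab
    rw [h1.2, h2.2] at this
    exact this
  have hcard₁ : A₁.card = B₁.card := by
    rw [← himg, Finset.card_image_of_injOn (fun a ha b hb => hinjcore a ha b hb)]
  set A₂ := A \ A₁ with hA₂def
  set B₂ := (Finset.univ : Finset NN) \ B₁ with hB₂def
  have hcard₂ : A₂.card = B₂.card := by
    rw [Finset.card_sdiff_of_subset hA₁A, Finset.card_sdiff_of_subset (Finset.subset_univ _), Finset.card_univ,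
      hcard, hcard₁]
  obtain ⟨e₂⟩ : Nonempty ({x // x ∈ A₂} ≃ {x // x ∈ B₂}) :=
    ⟨Fintype.equivOfCardEq (by rw [Fintype.card_coe, Fintype.card_coe, hcard₂])⟩
  have hNNne : Nonempty NN := ⟨w₁ 0⟩
  set ρ : M → NN := fun a =>
    if h1 : a ∈ A₁ then ρcore a else if h2 : a ∈ A₂ then (e₂ ⟨a, h2⟩ : NN) else w₁ 0
    with hρdef
  have hρ₁ : ∀ a ∈ A₁, ρ a = ρcore a := by
    intro a ha; rw [hρdef]; simp only [dif_pos ha]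
  have hρ₂ : ∀ a (h2 : a ∈ A₂), ρ a = (e₂ ⟨a, h2⟩ : NN) := by
    intro a h2
    have h1 : a ∉ A₁ := (Finset.mem_sdiff.1 h2).2
    rw [hρdef]; simp only [dif_neg h1, dif_pos h2]
  have hρB₁ : ∀ a ∈ A₁, ρ a ∈ B₁ := by
    intro a ha
    rw [hρ₁ a ha, ← himg]
    exact Finset.mem_image.2 ⟨a, ha, rfl⟩
  have hρB₂ : ∀ a (h2 : a ∈ A₂), ρ a ∈ B₂ := by
    intro a h2
    rw [hρ₂ a h2]
    exact (e₂ ⟨a, h2⟩).2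
  have hmemA : ∀ a ∈ A, a ∈ A₁ ∨ a ∈ A₂ := by
    intro a ha
    by_cases h : a ∈ A₁
    · exact Or.inl h
    · exact Or.inr (Finset.mem_sdiff.2 ⟨ha, h⟩)
  have hinjρ : ∀ a ∈ A, ∀ b ∈ A, ρ a = ρ b → a = b := by
    intro a ha b hb hab
    rcases hmemA a ha with h1 | h1 <;> rcases hmemA b hb with h2 | h2
    · rw [hρ₁ a h1, hρ₁ b h2] at hab
      exact hinjcore a h1 b h2 hab
    · exfalso
      have := hρB₂ b h2
      rw [← hab] at this
      exact (Finset.mem_sdiff.1 this).2 (hρB₁ a h1)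
    · exfalso
      have := hρB₂ a h1
      rw [hab] at this
      exact (Finset.mem_sdiff.1 this).2 (hρB₁ b h2)
    · rw [hρ₂ a h1, hρ₂ b h2] at hab
      have := e₂.injective (Subtype.ext hab)
      exact congrArg Subtype.val this
  have hsurj : ∀ b : NN, ∃ a ∈ A, ρ a = b := by
    have himgcard : (A.image ρ).card = Fintype.card NN := by
      rw [Finset.card_image_of_injOn (fun a ha b hb => hinjρ a ha b hb), hcard]
    have huniv := Finset.eq_univ_of_card _ himgcard
    intro b
    have hmem : b ∈ A.image ρ := by rw [huniv]; exact Finset.mem_univ b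
    obtain ⟨a, ha, hab⟩ := Finset.mem_image.1 hmem
    exact ⟨a, ha, hab⟩
  set w : ℕ → NN := fun x => ρ (v x) with hwdef
  have hvA : ∀ x ∈ W, v x ∈ A := fun x hx => Finset.mem_image.2 ⟨x, hx, rfl⟩
  have hwS : ∀ x ∈ S, w x = w₁ x := by
    intro x hx
    have hmem : v x ∈ A₁ := Finset.mem_image.2 ⟨x, hx, rfl⟩
    rw [hwdef]
    simp only
    rw [hρ₁ _ hmem, hρcoredef]
    exact (hpatt _ (hpick _ hmem).1 _ hx).1 (hpick _ hmem).2
  have hwW : ∀ x ∈ W, ∀ y ∈ W, (w x = w y ↔ v x = v y) := by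
    intro x hx y hy
    constructor
    · exact fun h => hinjρ _ (hvA x hx) _ (hvA y hy) h
    · intro h
      rw [hwdef]
      simp only
      rw [h]
  have hφw : φ.Realize w := (formula_realize_congr fun x hx => hwS x hx).2 hφw₁
  have hlW : ∀ i : Fin l.length, l.get i ∈ W := fun i =>
    hbase _ (mem_vlist.1 (l.get_mem i))
  have hww : (witF L T φ).Realize w := by
    refine realize_witF.2 ⟨hφw, fun g hg => ?_⟩
    have hgv : (arrP (L := L) l g).Realize v := by
      apply realize_arrP.2
      intro i j
      exact (realize_arrP.1 hg i j).trans (hwW _ (hlW i) _ (hlW j))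
    have hdv := himp g hgv
    apply realize_distinctF.2
    intro i j hi hj hij
    have h1 := realize_distinctF.1 hdv i j hi hj hij
    have hk := minSize_le_bigN (φ := φ) (T := T) g
    intro hcon
    exact h1 ((hwW _ (huBW i (lt_of_lt_of_le hi hk)) _ (huBW j (lt_of_lt_of_le hj hk))).1 hcon)
  have harr' : RealizesArr E V w := by
    intro x hx y hy
    exact (harr x hx y hy).trans
      (hwW x (Finset.mem_union_right _ hx) y (Finset.mem_union_right _ hy)).symm
  refine ⟨NN, instNN, hNN, w, hww, harr', fun a => ?_⟩
  obtain ⟨b, hb, hba⟩ := hsurj a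
  obtain ⟨x, hx, rfl⟩ := Finset.mem_image.1 hb
  exact ⟨x, hx, hba⟩

lemma witF_iff {T : L.Theory} (hsf : StablyFiniteT L T)
    {φ : L.Formula ℕ} (hQF : φ.IsQF)
    {M : Type} (inst : L.Structure M) (hM : ModelsT L T M inst) (v : ℕ → M) :
    RealizeIn L M inst φ v ↔
      ∃ w : ℕ → M, (∀ x : ℕ, x ∉ (witF L T φ).freeVarFinset \ φ.freeVarFinset → w x = v x) ∧
        RealizeIn L M inst (witF L T φ) w := by
  classical
  letI := inst
  constructor
  · intro hv
    have hφv : φ.Realize v := hv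
    set l := vlist φ with hl
    set g₀ := patt l v with hg₀def
    have hg₀ : (arrP (L := L) l g₀).Realize v := realize_arrP_patt v
    set ψ := φ ⊓ arrP (L := L) l g₀ with hψdef
    have hψQF : ψ.IsQF := hQF.inf isQF_arrP
    have hψv : ψ.Realize v := Formula.realize_inf.2 ⟨hφv, hg₀⟩
    set n₀ := minSize L T ψ with hn₀def
    obtain ⟨nn, hfm, hlenn⟩ := exists_hasFinModel hsf hψQF inst hM
      (show RealizeIn L M inst ψ v from hψv)
    have hn₀le : (n₀ : Cardinal) ≤ Cardinal.mk M :=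
      le_trans (by exact_mod_cast minSize_le hfm) hlenn
    have hne : Nonempty (Fin n₀ ↪ M) := by
      rw [← Cardinal.mk_fin n₀] at hn₀le
      exact (Cardinal.le_def _ _).1 hn₀le
    obtain ⟨emb⟩ := hne
    set w : ℕ → M := fun x =>
      if h : base φ ≤ x ∧ x - base φ < n₀ then emb ⟨x - base φ, h.2⟩ else v x with hwdef
    have hwfv : ∀ x ∈ φ.freeVarFinset, w x = v x := by
      intro x hx
      have := lt_base hx
      rw [hwdef]
      simp only
      rw [dif_neg (by omega)]
    have hwu : ∀ i (hi : i < n₀), w (base φ + i) = emb ⟨i, hi⟩ := by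
      intro i hi
      rw [hwdef]
      simp only
      have h : base φ ≤ base φ + i ∧ base φ + i - base φ < n₀ := by
        constructor
        · omega
        · simpa using hi
      rw [dif_pos h]
      congr 1
      apply Fin.ext
      simp
    refine ⟨w, ?_, ?_⟩
    · intro x hx
      rcases em (base φ ≤ x ∧ x - base φ < n₀) with h | h
      · exfalso
        apply hx
        have hxu : x ∈ uBlock L T φ := mem_uBlock.2
          ⟨x - base φ, lt_of_lt_of_le h.2 (minSize_le_bigN g₀), by omega⟩
        exact Finset.mem_sdiff.2 ⟨uBlock_subset_fvF_witF hxu, uBlock_disj hxu⟩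
      · rw [hwdef]
        simp only
        rw [dif_neg h]
    · show (witF L T φ).Realize w
      refine realize_witF.2 ⟨(formula_realize_congr hwfv).2 hφv, fun g hg => ?_⟩
      have hgv : (arrP (L := L) l g).Realize v := by
        have hsub : ∀ x ∈ (arrP (L := L) l g).freeVarFinset, w x = v x := fun x hx =>
          hwfv x (fvF_arrP_subset hx)
        exact (formula_realize_congr hsub).1 hg
      have hpat : ∀ i j, g i = g j ↔ g₀ i = g₀ j := by
        intro i j
        rw [realize_arrP.1 hgv i j, realize_arrP.1 hg₀ i j]
      have harr_eq : arrP (L := L) l g = arrP l g₀ := arrP_congr hpat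
      have hms : minSize L T (φ ⊓ arrP (L := L) l g) = n₀ := by rw [harr_eq]
      rw [hms]
      apply realize_distinctF.2
      intro i j hi hj hij hcon
      rw [hwu i hi, hwu j hj] at hcon
      have := emb.injective hcon
      rw [Fin.mk.injEq] at this
      exact hij this
  · rintro ⟨w, hagree, hw⟩
    have hww : (witF L T φ).Realize w := hw
    have hφw := (realize_witF.1 hww).1
    have hsub : ∀ x ∈ φ.freeVarFinset, w x = v x := fun x hx =>
      hagree x fun hmem => (Finset.mem_sdiff.1 hmem).2 hx
    exact (show φ.Realize v from (formula_realize_congr hsub).1 hφw)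

end SPW

/-- If a theory is stably finite and finitely smooth, then it has a strong pre-witness. -/
theorem stmt_14 (L : FirstOrder.Language.{u, v}) (T : L.Theory)
    (hsf : StablyFiniteT L T) (hfs : FinitelySmoothT L T) :
    ∃ wit : L.Formula ℕ → L.Formula ℕ, IsStrongPreWitness L T wit := by
  classical
  refine ⟨SPW.witF L T, ⟨⟨fun φ h => SPW.isQF_witF h,
    fun φ h M inst hM v => SPW.witF_iff hsf h inst hM v, ?_⟩, ?_⟩⟩
  · rintro φ hφ ⟨M, inst, hM, v, hv⟩
    have harr : RealizesArr (Setoid.ker (fun _ : ℕ => (0 : ℕ))) (∅ : Finset ℕ) v :=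
      fun x hx => absurd hx (Finset.notMem_empty x)
    obtain ⟨A, instA, hA, w, hw, _, hsurj⟩ :=
      SPW.strong_main hsf hfs hφ ∅ _ inst hM hv harr
    refine ⟨A, instA, hA, w, ?_, ?_⟩
    · letI := instA
      exact (SPW.realize_witF.1 hw).1
    · intro a
      obtain ⟨x, hx, hxa⟩ := hsurj a
      rw [Finset.union_empty] at hx
      exact ⟨x, hx, hxa⟩
  · rintro φ hφ V E ⟨M, inst, hM, v, hv, harr⟩
    obtain ⟨A, instA, hA, w, hw, harr', hsurj⟩ :=
      SPW.strong_main hsf hfs hφ V E inst hM hv harr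
    exact ⟨A, instA, hA, w, hw, harr', hsurj⟩
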